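/- arXiv:2011.11596 — 9 statements merged into one kernel-verified Lean document; each statement's English description precedes it below -/
import Mathlib

section
/- Let G be an acyclic attention graph on a nonempty finite set A of agents, with arbitrary additive monotonic utility functions. Then there exists an agent a* with no incoming arc, and for any such a* the allocation π given by π(a*) = R and π(a) = ∅ for all a ≠ a* is complete and weakly G-envy-free. In particular, a complete weakly G-envy-free allocation always exists when G is acyclic. -/
/-- For an acyclic attention graph on a nonempty agent set there
is an agent `a*` with no incoming arc; giving all resources to any such `a*`
(and nothing to anyone else) yields a complete, weakly G-envy-free allocation.
In particular, a complete weakly G-envy-free allocation exists. -/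
theorem stmt_2 {A R : Type*} [Fintype A] [Fintype R] [Nonempty A] [DecidableEq A]
    (E : A → A → Prop)
    (hacyc : ∀ a, ¬ Relation.TransGen E a a)
    (u : A → R → ℕ) :
    (∃ a : A, ∀ b, ¬ E b a) ∧
    (∀ aStar : A, (∀ b, ¬ E b aStar) →
      ((∀ a a' : A, a ≠ a' →
          Disjoint (if a = aStar then (Finset.univ : Finset R) else ∅)
                   (if a' = aStar then (Finset.univ : Finset R) else ∅)) ∧
       (∀ r : R, ∃ a : A, r ∈ (if a = aStar then (Finset.univ : Finset R) else ∅)) ∧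
       (∀ a b, E a b →
          ∑ r ∈ (if b = aStar then (Finset.univ : Finset R) else ∅), u a r ≤
          ∑ r ∈ (if a = aStar then (Finset.univ : Finset R) else ∅), u a r))) ∧
    (∃ π : A → Finset R, (∀ a a', a ≠ a' → Disjoint (π a) (π a')) ∧
      (∀ r : R, ∃ a, r ∈ π a) ∧
      (∀ a b, E a b → ∑ r ∈ π b, u a r ≤ ∑ r ∈ π a, u a r)) := by
  have hwf : WellFounded (Relation.TransGen E) := by
    have : IsIrrefl A (Relation.TransGen E) := ⟨hacyc⟩
    have : IsTrans A (Relation.TransGen E) := ⟨fun _ _ _ => Relation.TransGen.trans⟩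
    exact Finite.wellFounded_of_trans_of_irrefl _
  obtain ⟨a0, ha0⟩ := hwf.has_min Set.univ ⟨Classical.arbitrary A, trivial⟩
  have hsrc : ∀ b, ¬ E b a0 := fun b hb =>
    ha0.2 b trivial (Relation.TransGen.single hb)
  have main : ∀ aStar : A, (∀ b, ¬ E b aStar) →
      ((∀ a a' : A, a ≠ a' →
          Disjoint (if a = aStar then (Finset.univ : Finset R) else ∅)
                   (if a' = aStar then (Finset.univ : Finset R) else ∅)) ∧
       (∀ r : R, ∃ a : A, r ∈ (if a = aStar then (Finset.univ : Finset R) else ∅)) ∧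
       (∀ a b, E a b →
          ∑ r ∈ (if b = aStar then (Finset.univ : Finset R) else ∅), u a r ≤
          ∑ r ∈ (if a = aStar then (Finset.univ : Finset R) else ∅), u a r)) := by
    intro aStar hst
    refine ⟨?_, ?_, ?_⟩
    · intro a a' hne
      by_cases h1 : a = aStar <;> by_cases h2 : a' = aStar <;>
        simp_all
    · intro r
      exact ⟨aStar, by simp⟩
    · intro a b hab
      have hb : b ≠ aStar := fun h => hst a (h ▸ hab)
      simp [hb]
  refine ⟨⟨a0, hsrc⟩, main, ?_⟩
  obtain ⟨hd, hc, he⟩ := main a0 hsrc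
  exact ⟨fun a => if a = a0 then Finset.univ else ∅, hd, hc, he⟩
end

section
/- Assume the agents have identical 0/1 utilities given by a single utility function u : R → {0,1}, and let G be a strongly connected attention graph on a nonempty finite set A of agents. Then a complete weakly G-envy-free allocation exists if and only if |A| divides the number of resources valued 1, i.e., |A| divides |{r ∈ R : u(r) = 1}|. -/
/-- Counting lemma: in `Fin (n*k)` the number of indices whose block `i/k % n`
equals a fixed `j < n` is exactly `k`. -/
lemma count_block {m n k j : ℕ} (hm : m = n * k) (hj : j < n) :
    ((Finset.univ : Finset (Fin m)).filter (fun i => i.val / k % n = j)).card = k := by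
  rcases Nat.eq_zero_or_pos k with hk | hk
  · subst hk
    have h0 : m = 0 := by simpa using hm
    subst h0
    simp
  · have hcard : ((Finset.univ : Finset (Fin m)).filter (fun i => i.val / k % n = j)).card
        = (Finset.Ico (j * k) (j * k + k)).card := by
      apply Finset.card_nbij (fun i => i.val)
      · intro i hi
        simp only [Finset.coe_filter, Finset.mem_coe, Finset.mem_filter, Finset.mem_univ, true_and, Set.mem_setOf_eq] at hi
        have hlt : i.val < n * k := by rw [← hm]; exact i.isLt
        have hdiv : i.val / k < n := Nat.div_lt_iff_lt_mul hk |>.mpr hlt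
        have hmod : i.val / k = j := by rwa [Nat.mod_eq_of_lt hdiv] at hi
        have h1 := Nat.div_add_mod i.val k
        rw [hmod] at h1
        have h2 : i.val % k < k := Nat.mod_lt _ hk
        have hcomm : j * k = k * j := Nat.mul_comm _ _
        simp only [Finset.coe_Ico, Finset.mem_coe, Set.mem_Ico, Finset.mem_Ico]
        omega
      · intro a _ b _ hab
        exact Fin.ext hab
      · intro x hx
        simp only [Finset.coe_Ico, Set.mem_Ico] at hx
        have hxm : x < m := by
          have : (j + 1) * k ≤ n * k := Nat.mul_le_mul_right k hj
          rw [add_mul, one_mul] at this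
          omega
        refine ⟨⟨x, hxm⟩, ?_, rfl⟩
        simp only [Finset.coe_filter, Set.mem_setOf_eq, Finset.mem_univ, true_and]
        have hdiv : x / k = j := by
          have hle : j ≤ x / k := Nat.le_div_iff_mul_le hk |>.mpr (by omega)
          have hlt2 : x / k < j + 1 := Nat.div_lt_iff_lt_mul hk |>.mpr
            (by rw [add_mul, one_mul]; omega)
          omega
        rw [hdiv, Nat.mod_eq_of_lt hj]
    rw [hcard, Nat.card_Ico]
    omega

/-- Identical 0/1 utilities, strongly connected attention graph
on a nonempty agent set: a complete weakly G-envy-free allocation exists iff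
the number of agents divides the number of resources valued 1. -/
theorem stmt_6 {A R : Type*} [Fintype A] [Fintype R] [Nonempty A]
    (E : A → A → Prop) (hirr : ∀ a, ¬ E a a)
    (u : R → ℕ) (h01 : ∀ r, u r = 0 ∨ u r = 1)
    (hsc : ∀ a b : A, a ≠ b → Relation.TransGen E a b) :
    (∃ π : A → Finset R, (∀ a a', a ≠ a' → Disjoint (π a) (π a')) ∧
      (∀ r : R, ∃ a, r ∈ π a) ∧
      (∀ a b, E a b → ∑ r ∈ π b, u r ≤ ∑ r ∈ π a, u r)) ↔
    Fintype.card A ∣ (Finset.univ.filter (fun r : R => u r = 1)).card := by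
  classical
  constructor
  · rintro ⟨π, hdisj, hcov, henvy⟩
    set S : A → ℕ := fun a => ∑ r ∈ π a, u r with hS
    have hle : ∀ a b, a ≠ b → S b ≤ S a := by
      intro a b hab
      have h := hsc a b hab
      clear hab
      induction h with
      | single h => exact henvy _ _ h
      | tail _ h ih => exact le_trans (henvy _ _ h) ih
    obtain ⟨a0⟩ := ‹Nonempty A›
    have heq : ∀ a, S a = S a0 := by
      intro a
      rcases eq_or_ne a a0 with rfl | h
      · rfl
      · exact le_antisymm (hle a0 a h.symm) (hle a a0 h)
    have htot : ∑ a : A, S a = (Finset.univ.filter (fun r : R => u r = 1)).card := by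
      have h1 : ∑ a : A, S a = ∑ r : R, u r := by
        simp only [hS]
        have : ∀ a : A, ∑ r ∈ π a, u r
            = ∑ r : R, if r ∈ π a then u r else 0 := by
          intro a
          rw [Finset.sum_ite_mem, Finset.univ_inter]
        rw [Finset.sum_congr rfl fun a _ => this a, Finset.sum_comm]
        refine Finset.sum_congr rfl fun r _ => ?_
        obtain ⟨a, ha⟩ := hcov r
        rw [Finset.sum_eq_single a]
        · rw [if_pos ha]
        · intro b _ hb
          rw [if_neg]
          intro hrb
          exact Finset.disjoint_left.mp (hdisj b a hb) hrb ha
        · intro h; exact absurd (Finset.mem_univ a) h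
      rw [h1, Finset.card_filter]
      refine Finset.sum_congr rfl fun r _ => ?_
      rcases h01 r with h | h <;> simp [h]
    refine ⟨S a0, ?_⟩
    rw [← htot, Finset.sum_congr rfl fun a _ => heq a, Finset.sum_const, smul_eq_mul,
      Finset.card_univ]
  · rintro ⟨k, hk⟩
    set n := Fintype.card A with hn
    have npos : 0 < n := Fintype.card_pos
    set s : Finset R := Finset.univ.filter (fun r : R => u r = 1) with hs
    have hm : s.card = n * k := hk
    let e : A ≃ Fin n := Fintype.equivFin A
    let f : s ≃ Fin s.card := s.equivFin
    let assign : R → A := fun r =>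
      if h : u r = 1 then
        e.symm ⟨(f ⟨r, Finset.mem_filter.mpr ⟨Finset.mem_univ r, h⟩⟩).val / k % n,
          Nat.mod_lt _ npos⟩
      else e.symm ⟨0, npos⟩
    refine ⟨fun a => Finset.univ.filter (fun r => assign r = a), ?_, ?_, ?_⟩
    · intro a a' haa'
      rw [Finset.disjoint_left]
      intro r hr hr'
      simp only [Finset.mem_filter] at hr hr'
      exact haa' (hr.2 ▸ hr'.2 ▸ rfl)
    · intro r
      exact ⟨assign r, by simp⟩
    · intro a b _
      have key : ∀ a : A, ∑ r ∈ Finset.univ.filter (fun r => assign r = a), u r = k := by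
        intro a
        have hsum : ∑ r ∈ Finset.univ.filter (fun r => assign r = a), u r
            = (Finset.univ.filter (fun r : R => assign r = a ∧ u r = 1)).card := by
          rw [Finset.sum_filter, Finset.card_filter]
          refine Finset.sum_congr rfl fun r _ => ?_
          rcases h01 r with h | h <;> split_ifs with h1 h2 <;> simp_all
        rw [hsum]
        have hbij : (Finset.univ.filter (fun r : R => assign r = a ∧ u r = 1)).card
            = ((Finset.univ : Finset (Fin s.card)).filter
                (fun i => i.val / k % n = (e a).val)).card := by
          apply Finset.card_bij
            (fun r hr => f ⟨r, Finset.mem_filter.mpr ⟨Finset.mem_univ r,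
              (Finset.mem_filter.mp hr).2.2⟩⟩)
          · intro r hr
            simp only [Finset.mem_filter, Finset.mem_univ, true_and] at hr ⊢
            obtain ⟨ha, hu⟩ := hr
            have h1 : assign r = e.symm ⟨(f ⟨r, Finset.mem_filter.mpr
                ⟨Finset.mem_univ r, hu⟩⟩).val / k % n, Nat.mod_lt _ npos⟩ := dif_pos hu
            rw [h1, Equiv.symm_apply_eq] at ha
            exact congrArg Fin.val ha
          · intro r hr r' hr' hff
            exact congrArg Subtype.val (f.injective hff)
          · intro i hi
            simp only [Finset.mem_filter, Finset.mem_univ, true_and] at hi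
            have hmem : (f.symm i).val ∈ s := (f.symm i).2
            have hu : u (f.symm i).val = 1 := (Finset.mem_filter.mp hmem).2
            have hceq : (⟨(f.symm i).val, Finset.mem_filter.mpr
                ⟨Finset.mem_univ _, hu⟩⟩ : s) = f.symm i := Subtype.ext rfl
            have hfc : f ⟨(f.symm i).val, Finset.mem_filter.mpr
                ⟨Finset.mem_univ _, hu⟩⟩ = i := by
              rw [hceq]; exact f.apply_symm_apply i
            refine ⟨(f.symm i).val, ?_, hfc⟩
            simp only [Finset.mem_filter, Finset.mem_univ, true_and]
            refine ⟨?_, hu⟩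
            have h1 : assign (f.symm i).val = e.symm ⟨(f ⟨(f.symm i).val,
                Finset.mem_filter.mpr ⟨Finset.mem_univ _, hu⟩⟩).val / k % n,
                Nat.mod_lt _ npos⟩ := dif_pos hu
            rw [h1, Equiv.symm_apply_eq]
            apply Fin.ext
            show (f ⟨(f.symm i).val, _⟩).val / k % n = (e a).val
            rw [hfc]
            exact hi
        rw [hbij]
        exact count_block hm (e a).isLt
      rw [key a, key b]
end

section
/- Assume the agents have identical utilities given by a single additive monotonic utility function u with u(r) > 0 for every resource r ∈ R, and let G be a strongly connected attention graph on A. If R is nonempty and |A| > |R|, then no complete weakly G-envy-free allocation exists. -/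
/-- Identical positive utilities, strongly connected attention
graph, nonempty resource set, more agents than resources: no complete
weakly G-envy-free allocation exists. -/
theorem stmt_7 {A R : Type*} [Fintype A] [Fintype R] [Nonempty R]
    (E : A → A → Prop) (hirr : ∀ a, ¬ E a a)
    (u : R → ℕ) (hu : ∀ r, 0 < u r)
    (hsc : ∀ a b : A, a ≠ b → Relation.TransGen E a b)
    (hcard : Fintype.card R < Fintype.card A) :
    ¬ ∃ π : A → Finset R, (∀ a a', a ≠ a' → Disjoint (π a) (π a')) ∧
      (∀ r : R, ∃ a, r ∈ π a) ∧
      (∀ a b, E a b → ∑ r ∈ π b, u r ≤ ∑ r ∈ π a, u r) := by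
  rintro ⟨π, hdisj, hcomp, hef⟩
  -- transitive inequality
  have htrans : ∀ x y, Relation.TransGen E x y →
      ∑ r ∈ π y, u r ≤ ∑ r ∈ π x, u r := by
    intro x y h
    induction h with
    | single h => exact hef _ _ h
    | tail _ h ih => exact le_trans (hef _ _ h) ih
  -- some agent has empty bundle
  have hempty : ∃ a, π a = ∅ := by
    by_contra h
    push_neg at h
    choose f hf using fun a => h a
    have hinj : Function.Injective f := by
      intro a b hab
      by_contra hne
      exact Finset.disjoint_left.mp (hdisj a b hne) (hf a) (hab ▸ hf b)
    exact absurd (Fintype.card_le_of_injective f hinj) (not_le.mpr hcard)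
  obtain ⟨a, ha⟩ := hempty
  obtain ⟨r⟩ := ‹Nonempty R›
  obtain ⟨b, hb⟩ := hcomp r
  have hne : a ≠ b := by
    rintro rfl
    rw [ha] at hb
    exact absurd hb (Finset.notMem_empty r)
  have h1 : ∑ s ∈ π b, u s ≤ ∑ s ∈ π a, u s := htrans _ _ (hsc a b hne)
  have h2 : 0 < ∑ s ∈ π b, u s :=
    Finset.sum_pos' (fun s _ => Nat.zero_le _) ⟨r, hb, hu r⟩
  rw [ha, Finset.sum_empty] at h1
  omega
end

section
/- Assume the agents have identical utilities given by a single additive monotonic utility function u with u(r) > 0 for every resource r ∈ R, and let π be a weakly G-envy-free allocation. Let C ⊆ A be a set of agents that are pairwise mutually reachable in G (i.e., C is contained in one strongly connected component) with |C| > |R|. Then π(a) = ∅ for every a ∈ C, and moreover π(b) = ∅ for every agent b reachable from some agent of C. -/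
/-- Identical positive utilities; in a weakly G-envy-free
allocation, a set `C` of pairwise mutually reachable agents with `|C| > |R|`
receives nothing, and so does every agent reachable from some agent of `C`. -/
theorem stmt_8 {A R : Type*} [Fintype A] [Fintype R]
    (E : A → A → Prop) (hirr : ∀ a, ¬ E a a)
    (u : R → ℕ) (hu : ∀ r, 0 < u r)
    (π : A → Finset R) (hdisj : ∀ a a', a ≠ a' → Disjoint (π a) (π a'))
    (hef : ∀ a b, E a b → ∑ r ∈ π b, u r ≤ ∑ r ∈ π a, u r)
    (C : Finset A)
    (hC : ∀ a ∈ C, ∀ a' ∈ C, a ≠ a' → Relation.TransGen E a a')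
    (hcard : Fintype.card R < C.card) :
    (∀ a ∈ C, π a = ∅) ∧
    (∀ b : A, (∃ a ∈ C, Relation.TransGen E a b) → π b = ∅) := by
  classical
  have hmono : ∀ a b, Relation.TransGen E a b →
      ∑ r ∈ π b, u r ≤ ∑ r ∈ π a, u r := by
    intro a b h
    induction h with
    | single h => exact hef _ _ h
    | tail _ h ih => exact le_trans (hef _ _ h) ih
  have hzero : ∀ a, ∑ r ∈ π a, u r = 0 → π a = ∅ := by
    intro a h
    by_contra hne
    obtain ⟨r, hr⟩ := Finset.nonempty_iff_ne_empty.2 hne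
    have h1 := Finset.single_le_sum (f := u) (fun i _ => Nat.zero_le _) hr
    have := hu r
    omega
  -- pigeonhole: some agent in C gets nothing
  have hex : ∃ a0 ∈ C, π a0 = ∅ := by
    by_contra hno
    push_neg at hno
    have h1 : ∀ a ∈ C, 1 ≤ (π a).card := by
      intro a ha
      exact Finset.card_pos.2 (hno a ha)
    have h2 : C.card ≤ ∑ a ∈ C, (π a).card := by
      calc C.card = ∑ a ∈ C, 1 := by simp
        _ ≤ ∑ a ∈ C, (π a).card := Finset.sum_le_sum h1
    have h3 : ∑ a ∈ C, (π a).card = (C.biUnion π).card :=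
      (Finset.card_biUnion (fun a _ a' _ h => hdisj a a' h)).symm
    have h4 : (C.biUnion π).card ≤ Fintype.card R := Finset.card_le_univ _
    omega
  obtain ⟨a0, ha0, ha0e⟩ := hex
  have hCz : ∀ a ∈ C, π a = ∅ := by
    intro a ha
    by_cases h : a = a0
    · rw [h]; exact ha0e
    · apply hzero
      have := hmono a0 a (hC a0 ha0 a ha (fun he => h he.symm))
      rw [ha0e, Finset.sum_empty] at this
      exact Nat.le_zero.mp this
  refine ⟨hCz, ?_⟩
  rintro b ⟨a, ha, hab⟩
  apply hzero
  have := hmono a b hab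
  rw [hCz a ha, Finset.sum_empty] at this
  exact Nat.le_zero.mp this
end

section
/- Assume the agents have identical utilities given by a single additive monotonic utility function u with u(r) > 0 for every resource r ∈ R, and let π be a weakly G-envy-free allocation. Then the following three statements are equivalent: (1) π is complete; (2) π is Pareto-efficient; (3) the utilitarian social welfare of π is maximal, namely W(π) = Σ_{r∈R} u(r). -/
/-- Identical positive utilities; for a weakly G-envy-free
allocation, completeness, Pareto-efficiency, and maximality of the utilitarian
social welfare (`W(π) = Σ_{r∈R} u r`) are equivalent. -/
theorem stmt_13 {A R : Type*} [Fintype A] [Fintype R] [Nonempty A]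
    (E : A → A → Prop) (hirr : ∀ a, ¬ E a a)
    (u : R → ℕ) (hu : ∀ r, 0 < u r)
    (π : A → Finset R) (hdisj : ∀ x y, x ≠ y → Disjoint (π x) (π y))
    (hef : ∀ a b, E a b → ∑ r ∈ π b, u r ≤ ∑ r ∈ π a, u r) :
    ((∀ r : R, ∃ a, r ∈ π a) ↔
      ¬ ∃ π' : A → Finset R, (∀ x y, x ≠ y → Disjoint (π' x) (π' y)) ∧
        (∀ a, ∑ r ∈ π a, u r ≤ ∑ r ∈ π' a, u r) ∧
        (∃ a, ∑ r ∈ π a, u r < ∑ r ∈ π' a, u r)) ∧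
    ((¬ ∃ π' : A → Finset R, (∀ x y, x ≠ y → Disjoint (π' x) (π' y)) ∧
        (∀ a, ∑ r ∈ π a, u r ≤ ∑ r ∈ π' a, u r) ∧
        (∃ a, ∑ r ∈ π a, u r < ∑ r ∈ π' a, u r)) ↔
      (∑ a : A, ∑ r ∈ π a, u r = ∑ r : R, u r)) := by
  classical
  -- total welfare bound for any disjoint allocation
  have hbound : ∀ π' : A → Finset R, (∀ x y, x ≠ y → Disjoint (π' x) (π' y)) →
      ∑ a : A, ∑ r ∈ π' a, u r ≤ ∑ r : R, u r := by
    intro π' hd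
    have hsum : ∑ a : A, ∑ r ∈ π' a, u r = ∑ r ∈ Finset.univ.biUnion π', u r := by
      rw [Finset.sum_biUnion]
      intro x _ y _ hxy
      exact hd x y hxy
    rw [hsum]
    exact Finset.sum_le_sum_of_subset (Finset.subset_univ _)
  -- complete → max welfare
  have h1 : (∀ r : R, ∃ a, r ∈ π a) → ∑ a : A, ∑ r ∈ π a, u r = ∑ r : R, u r := by
    intro hc
    have hsum : ∑ a : A, ∑ r ∈ π a, u r = ∑ r ∈ Finset.univ.biUnion π, u r := by
      rw [Finset.sum_biUnion]
      intro x _ y _ hxy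
      exact hdisj x y hxy
    rw [hsum]
    congr 1
    apply Finset.eq_univ_iff_forall.2
    intro r
    obtain ⟨a, ha⟩ := hc r
    exact Finset.mem_biUnion.2 ⟨a, Finset.mem_univ a, ha⟩
  -- max welfare → Pareto
  have h2 : ∑ a : A, ∑ r ∈ π a, u r = ∑ r : R, u r →
      ¬ ∃ π' : A → Finset R, (∀ x y, x ≠ y → Disjoint (π' x) (π' y)) ∧
        (∀ a, ∑ r ∈ π a, u r ≤ ∑ r ∈ π' a, u r) ∧
        (∃ a, ∑ r ∈ π a, u r < ∑ r ∈ π' a, u r) := by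
    rintro hmax ⟨π', hd, hle, a₀, hlt⟩
    have : ∑ a : A, ∑ r ∈ π a, u r < ∑ a : A, ∑ r ∈ π' a, u r :=
      Finset.sum_lt_sum (fun a _ => hle a) ⟨a₀, Finset.mem_univ a₀, hlt⟩
    have := lt_of_lt_of_le this (hbound π' hd)
    omega
  -- Pareto → complete
  have h3 : (¬ ∃ π' : A → Finset R, (∀ x y, x ≠ y → Disjoint (π' x) (π' y)) ∧
        (∀ a, ∑ r ∈ π a, u r ≤ ∑ r ∈ π' a, u r) ∧
        (∃ a, ∑ r ∈ π a, u r < ∑ r ∈ π' a, u r)) → ∀ r : R, ∃ a, r ∈ π a := by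
    intro hpo r₀
    by_contra hr
    push_neg at hr
    obtain ⟨a₀⟩ := (inferInstance : Nonempty A)
    apply hpo
    refine ⟨fun a => if a = a₀ then insert r₀ (π a₀) else π a, ?_, ?_, ⟨a₀, ?_⟩⟩
    · intro x y hxy
      dsimp only
      by_cases hx : x = a₀
      · subst hx
        rw [if_pos rfl, if_neg (fun h => hxy h.symm), Finset.disjoint_insert_left]
        exact ⟨hr y, hdisj _ y hxy⟩
      · rw [if_neg hx]
        by_cases hy : y = a₀
        · subst hy
          rw [if_pos rfl, Finset.disjoint_insert_right]
          exact ⟨hr x, hdisj x _ hxy⟩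
        · rw [if_neg hy]; exact hdisj x y hxy
    · intro a
      dsimp only
      by_cases ha : a = a₀
      · subst ha
        rw [if_pos rfl]
        exact Finset.sum_le_sum_of_subset (Finset.subset_insert _ _)
      · simp [ha]
    · dsimp only
      rw [if_pos rfl, Finset.sum_insert (hr a₀)]
      have := hu r₀
      omega
  exact ⟨⟨fun hc => h2 (h1 hc), h3⟩, ⟨fun hp => h1 (h3 hp), h2⟩⟩
end

section
/- Assume all agents have 0/1 utility functions (u_a(r) ∈ {0,1} for all a, r) and that every resource is valued 1 by at least one agent, and let π be a weakly G-envy-free allocation. Then: (i) π is Pareto-efficient if and only if its utilitarian social welfare is maximal, namely W(π) = Σ_{r∈R} max_{a∈A} u_a(r); and (ii) if π is Pareto-efficient, then π is complete. -/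
/-- 0/1 utilities, every resource valued 1 by some agent; for a
weakly G-envy-free allocation: (i) Pareto-efficiency is equivalent to maximal
utilitarian social welfare `W(π) = Σ_{r∈R} max_a u a r`; (ii) Pareto-efficiency
implies completeness. -/
theorem stmt_14 {A R : Type*} [Fintype A] [Fintype R]
    (E : A → A → Prop) (hirr : ∀ a, ¬ E a a)
    (u : A → R → ℕ) (h01 : ∀ a r, u a r = 0 ∨ u a r = 1)
    (hval : ∀ r : R, ∃ a : A, u a r = 1)
    (π : A → Finset R) (hdisj : ∀ x y, x ≠ y → Disjoint (π x) (π y))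
    (hef : ∀ a b, E a b → ∑ r ∈ π b, u a r ≤ ∑ r ∈ π a, u a r) :
    ((¬ ∃ π' : A → Finset R, (∀ x y, x ≠ y → Disjoint (π' x) (π' y)) ∧
        (∀ a, ∑ r ∈ π a, u a r ≤ ∑ r ∈ π' a, u a r) ∧
        (∃ a, ∑ r ∈ π a, u a r < ∑ r ∈ π' a, u a r)) ↔
      (∑ a : A, ∑ r ∈ π a, u a r = ∑ r : R, Finset.univ.sup (fun a => u a r))) ∧
    ((¬ ∃ π' : A → Finset R, (∀ x y, x ≠ y → Disjoint (π' x) (π' y)) ∧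
        (∀ a, ∑ r ∈ π a, u a r ≤ ∑ r ∈ π' a, u a r) ∧
        (∃ a, ∑ r ∈ π a, u a r < ∑ r ∈ π' a, u a r)) →
      (∀ r : R, ∃ a, r ∈ π a)) := by
  classical
  -- each resource's sup utility is 1
  have hsup : ∀ r : R, (Finset.univ.sup (fun a => u a r)) = 1 := by
    intro r
    obtain ⟨b, hb⟩ := hval r
    refine le_antisymm (Finset.sup_le fun a _ => ?_) ?_
    · rcases h01 a r with h | h <;> omega
    · have := Finset.le_sup (f := fun a => u a r) (Finset.mem_univ b)
      simpa [hb] using this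
  -- general welfare bound for any disjoint allocation
  have hbound : ∀ π' : A → Finset R, (∀ x y, x ≠ y → Disjoint (π' x) (π' y)) →
      ∑ a : A, ∑ r ∈ π' a, u a r ≤ Fintype.card R := by
    intro π' hd
    calc ∑ a : A, ∑ r ∈ π' a, u a r
        ≤ ∑ a : A, (π' a).card := by
          refine Finset.sum_le_sum fun a _ => ?_
          calc ∑ r ∈ π' a, u a r ≤ ∑ r ∈ π' a, 1 := by
                refine Finset.sum_le_sum fun r _ => ?_
                rcases h01 a r with h | h <;> omega
            _ = (π' a).card := by simp
      _ = (Finset.univ.biUnion π').card := by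
          rw [Finset.card_biUnion]
          intro x _ y _ hxy; exact hd x y hxy
      _ ≤ Fintype.card R := by
          simpa using Finset.card_le_card (Finset.subset_univ (Finset.univ.biUnion π'))
  -- key: Pareto efficiency forces every resource to be held by someone valuing it 1
  have key : (¬ ∃ π' : A → Finset R, (∀ x y, x ≠ y → Disjoint (π' x) (π' y)) ∧
        (∀ a, ∑ r ∈ π a, u a r ≤ ∑ r ∈ π' a, u a r) ∧
        (∃ a, ∑ r ∈ π a, u a r < ∑ r ∈ π' a, u a r)) →
      ∀ r0 : R, ∃ a, r0 ∈ π a ∧ u a r0 = 1 := by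
    intro heff r0
    by_contra hcon
    push_neg at hcon
    -- so any holder of r0 values it 0
    have hzero : ∀ a, r0 ∈ π a → u a r0 = 0 := by
      intro a ha
      rcases h01 a r0 with h | h
      · exact h
      · exact absurd h (hcon a ha)
    obtain ⟨b, hb⟩ := hval r0
    have hbnot : r0 ∉ π b := fun hmem => by simp [hzero b hmem] at hb
    apply heff
    refine ⟨fun a => if a = b then insert r0 (π a) else (π a).erase r0, ?_, ?_, ?_⟩
    · intro x y hxy
      dsimp only
      by_cases hx : x = b
      · have hy : ¬ y = b := by rw [hx] at hxy; exact fun h => hxy h.symm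
        rw [if_pos hx, if_neg hy, Finset.disjoint_insert_left]
        refine ⟨by simp, ?_⟩
        exact (hdisj x y hxy).mono_right (Finset.erase_subset _ _)
      · by_cases hy : y = b
        · rw [if_neg hx, if_pos hy, Finset.disjoint_insert_right]
          refine ⟨by simp, ?_⟩
          exact (hdisj x y hxy).mono_left (Finset.erase_subset _ _)
        · rw [if_neg hx, if_neg hy]
          exact ((hdisj x y hxy).mono_left (Finset.erase_subset _ _)).mono_right
            (Finset.erase_subset _ _)
    · intro a
      dsimp only
      by_cases ha : a = b
      · subst ha
        rw [if_pos rfl, Finset.sum_insert hbnot]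
        omega
      · rw [if_neg ha]
        by_cases hm : r0 ∈ π a
        · rw [Finset.sum_erase _ (hzero a hm)]
        · rw [Finset.erase_eq_of_notMem hm]
    · exact ⟨b, by dsimp only; rw [if_pos rfl, Finset.sum_insert hbnot]; omega⟩
  -- welfare of π written per-resource
  have hswap : ∑ a : A, ∑ r ∈ π a, u a r
      = ∑ r : R, ∑ a : A, if r ∈ π a then u a r else 0 := by
    rw [Finset.sum_comm]
    refine Finset.sum_congr rfl fun a _ => ?_
    rw [Finset.sum_ite_mem]
    simp [Finset.univ_inter]
  constructor
  · constructor
    · -- efficiency → max welfare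
      intro heff
      have hge : Fintype.card R ≤ ∑ a : A, ∑ r ∈ π a, u a r := by
        rw [hswap]
        have : ∀ r : R, 1 ≤ ∑ a : A, if r ∈ π a then u a r else 0 := by
          intro r
          obtain ⟨a, ha, hu⟩ := key heff r
          calc (1 : ℕ) = if r ∈ π a then u a r else 0 := by simp [ha, hu]
            _ ≤ _ := Finset.single_le_sum (f := fun a => if r ∈ π a then u a r else 0)
                (fun i _ => Nat.zero_le _) (Finset.mem_univ a)
        calc Fintype.card R = ∑ _r : R, 1 := by simp
          _ ≤ _ := Finset.sum_le_sum fun r _ => this r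
      have hle := hbound π hdisj
      have : ∑ r : R, Finset.univ.sup (fun a => u a r) = Fintype.card R := by
        simp [hsup]
      omega
    · -- max welfare → efficiency
      intro hW ⟨π', hd', hge', a0, hlt'⟩
      have h1 : ∑ a : A, ∑ r ∈ π a, u a r < ∑ a : A, ∑ r ∈ π' a, u a r :=
        Finset.sum_lt_sum (fun a _ => hge' a) ⟨a0, Finset.mem_univ a0, hlt'⟩
      have h2 := hbound π' hd'
      have h3 : ∑ r : R, Finset.univ.sup (fun a => u a r) = Fintype.card R := by simp [hsup]
      omega
  · intro heff r
    obtain ⟨a, ha, _⟩ := key heff r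
    exact ⟨a, ha⟩
end

section
/- Let G be an acyclic attention graph on a finite set A of agents with arbitrary additive monotonic utility functions. Then there exists an allocation that is both weakly G-envy-free and Pareto-efficient. -/
open Finset

/-- For an acyclic attention graph (arbitrary additive monotonic
utilities) there exists an allocation that is both weakly G-envy-free and
Pareto-efficient. -/
theorem stmt_15 {A R : Type*} [Fintype A] [Fintype R]
    (E : A → A → Prop)
    (hacyc : ∀ a, ¬ Relation.TransGen E a a)
    (u : A → R → ℕ) :
    ∃ π : A → Finset R, (∀ x y, x ≠ y → Disjoint (π x) (π y)) ∧
      (∀ a b, E a b → ∑ r ∈ π b, u a r ≤ ∑ r ∈ π a, u a r) ∧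
      ¬ ∃ π' : A → Finset R, (∀ x y, x ≠ y → Disjoint (π' x) (π' y)) ∧
        (∀ a, ∑ r ∈ π a, u a r ≤ ∑ r ∈ π' a, u a r) ∧
        (∃ a, ∑ r ∈ π a, u a r < ∑ r ∈ π' a, u a r) := by
  classical
  -- rank function (topological order)
  set f : A → ℕ := fun a => (univ.filter (fun x => Relation.TransGen E x a)).card with hfdef
  have hf : ∀ a b, E a b → f a < f b := by
    intro a b hab
    apply Finset.card_lt_card
    constructor
    · intro x hx
      simp only [mem_filter, mem_univ, true_and] at hx ⊢
      exact hx.tail hab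
    · intro hsub
      have ha : a ∈ univ.filter (fun x => Relation.TransGen E x b) := by
        simp [Relation.TransGen.single hab]
      have := hsub ha
      simp only [mem_filter, mem_univ, true_and] at this
      exact hacyc a this
  have hfle : ∀ a, f a ≤ Fintype.card A := fun a => by
    simpa using Finset.card_filter_le univ _
  -- utility bound
  set N : ℕ := (∑ a, ∑ r, u a r) + 1 with hNdef
  have hN1 : 1 ≤ N := by omega
  have hNbound : ∀ (b : A) (S : Finset R), ∑ r ∈ S, u b r < N := by
    intro b S
    have h1 : ∑ r ∈ S, u b r ≤ ∑ r, u b r :=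
      Finset.sum_le_sum_of_subset (Finset.subset_univ S)
    have h2 : ∑ r, u b r ≤ ∑ a, ∑ r, u a r :=
      Finset.single_le_sum (f := fun a => ∑ r, u a r) (fun _ _ => Nat.zero_le _)
        (mem_univ b)
    omega
  -- weights
  set n : ℕ := Fintype.card A with hndef
  set w : A → ℕ := fun a => N ^ (n - f a) with hwdef
  have hwpos : ∀ a, 0 < w a := fun a => pow_pos (by omega) _
  have hw : ∀ a b, E a b → N * w b ≤ w a := by
    intro a b hab
    have h1 : f a < f b := hf a b hab
    have h2 : f b ≤ n := hfle b
    have h3 : n - f b + 1 ≤ n - f a := by omega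
    calc N * w b = N ^ (n - f b + 1) := by rw [pow_succ, mul_comm]
    _ ≤ N ^ (n - f a) := Nat.pow_le_pow_right (by omega) h3
  -- weighted welfare
  set W : (A → Finset R) → ℕ := fun π => ∑ a, w a * ∑ r ∈ π a, u a r with hWdef
  -- maximizer over valid allocations
  obtain ⟨π, hπmem, hπmax⟩ := Finset.exists_max_image
    (univ.filter (fun π : A → Finset R => ∀ x y, x ≠ y → Disjoint (π x) (π y))) W
    ⟨fun _ => (∅ : Finset R), by simp⟩
  simp only [mem_filter, mem_univ, true_and] at hπmem
  have hπmax' : ∀ π' : A → Finset R, (∀ x y, x ≠ y → Disjoint (π' x) (π' y)) →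
      W π' ≤ W π := by
    intro π' h
    exact hπmax π' (mem_filter.mpr ⟨mem_univ _, h⟩)
  refine ⟨π, hπmem, ?_, ?_⟩
  · -- envy-freeness along arcs
    intro a b hab
    by_contra h
    push_neg at h
    have hab' : a ≠ b := by
      rintro rfl
      exact hacyc a (Relation.TransGen.single hab)
    set π' : A → Finset R := fun x =>
      if x = a then π a ∪ π b else if x = b then ∅ else π x with hπ'def
    have hd' : ∀ x y, x ≠ y → Disjoint (π' x) (π' y) := by
      intro x y hxy
      simp only [hπ'def]
      by_cases hxa : x = a
      · subst hxa
        rw [if_pos rfl]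
        by_cases hya : y = x
        · exact absurd hya.symm hxy
        · rw [if_neg hya]
          by_cases hyb : y = b
          · rw [if_pos hyb]; exact Finset.disjoint_empty_right _
          · rw [if_neg hyb]
            exact Finset.disjoint_union_left.mpr
              ⟨hπmem x y hxy, hπmem b y (fun h => hyb h.symm)⟩
      · rw [if_neg hxa]
        by_cases hxb : x = b
        · rw [if_pos hxb]; exact Finset.disjoint_empty_left _
        · rw [if_neg hxb]
          by_cases hya : y = a
          · rw [if_pos hya]
            subst hya
            exact Finset.disjoint_union_right.mpr ⟨hπmem x y hxa, hπmem x b hxb⟩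
          · rw [if_neg hya]
            by_cases hyb : y = b
            · rw [if_pos hyb]; exact Finset.disjoint_empty_right _
            · rw [if_neg hyb]; exact hπmem x y hxy
    have hdisjab : Disjoint (π a) (π b) := hπmem a b hab'
    have hsum_union : ∑ r ∈ π a ∪ π b, u a r
        = ∑ r ∈ π a, u a r + ∑ r ∈ π b, u a r := Finset.sum_union hdisjab
    set Ab : ℕ := ∑ r ∈ π b, u a r with hAbdef
    set Bb : ℕ := ∑ r ∈ π b, u b r with hBbdef
    have key : W π' + w b * Bb = W π + w a * Ab := by
      have h1 : W π' + w b * Bb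
          = ∑ x, (w x * ∑ r ∈ π' x, u x r + if x = b then w b * Bb else 0) := by
        rw [Finset.sum_add_distrib, Finset.sum_ite_eq' univ b, if_pos (mem_univ b)]
      have h2 : W π + w a * Ab
          = ∑ x, (w x * ∑ r ∈ π x, u x r + if x = a then w a * Ab else 0) := by
        rw [Finset.sum_add_distrib, Finset.sum_ite_eq' univ a, if_pos (mem_univ a)]
      rw [h1, h2]
      apply Finset.sum_congr rfl
      intro x _
      by_cases hxa : x = a
      · subst hxa
        simp only [hπ'def, if_pos rfl, if_neg hab', if_true, eq_self_iff_true]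
        rw [hsum_union]
        ring
      · by_cases hxb : x = b
        · subst hxb
          simp only [hπ'def, if_neg hxa, if_pos rfl, if_neg (Ne.symm hab')]
          simp
          exact Or.inl hBbdef
        · simp [hπ'def, hxa, hxb]
    have hAb1 : 1 ≤ Ab := by omega
    have hstrict : w b * Bb < w a * Ab := by
      have h1 : w b * Bb < w b * N :=
        mul_lt_mul_of_pos_left (hNbound b (π b)) (hwpos b)
      have h2 : w b * N ≤ w a := by rw [mul_comm]; exact hw a b hab
      have h3 : w a ≤ w a * Ab := Nat.le_mul_of_pos_right _ (by omega)
      omega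
    have := hπmax' π' hd'
    omega
  · -- Pareto efficiency
    rintro ⟨π', hd', hge, a, hlt⟩
    have hWlt : W π < W π' := by
      apply Finset.sum_lt_sum
      · intro i _
        exact Nat.mul_le_mul_left _ (hge i)
      · exact ⟨a, mem_univ a, mul_lt_mul_of_pos_left hlt (hwpos a)⟩
    have := hπmax' π' hd'
    omega
end

section
/- Let G be an acyclic attention graph on a nonempty finite set A of agents, and assume all agents have 0/1 utility functions (u_a(r) ∈ {0,1} for all a, r). Then there exists a weakly G-envy-free allocation π whose utilitarian social welfare attains the maximum possible value over all allocations, namely W(π) = Σ_{r∈R} max_{a∈A} u_a(r). -/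
/-- Acyclic attention graph on a nonempty agent set, 0/1
utilities: there exists a weakly G-envy-free allocation whose utilitarian
social welfare attains the maximum possible value `Σ_{r∈R} max_a u a r`. -/
theorem stmt_16 {A R : Type*} [Fintype A] [Fintype R] [Nonempty A]
    (E : A → A → Prop)
    (hacyc : ∀ a, ¬ Relation.TransGen E a a)
    (u : A → R → ℕ) (h01 : ∀ a r, u a r = 0 ∨ u a r = 1) :
    ∃ π : A → Finset R, (∀ x y, x ≠ y → Disjoint (π x) (π y)) ∧
      (∀ a b, E a b → ∑ r ∈ π b, u a r ≤ ∑ r ∈ π a, u a r) ∧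
      (∑ a : A, ∑ r ∈ π a, u a r = ∑ r : R, Finset.univ.sup (fun a => u a r)) := by
  classical
  set f : A → ℕ := fun a =>
    (Finset.univ.filter (fun b => b = a ∨ Relation.TransGen E b a)).card with hfdef
  have hf : ∀ a b, E a b → f a < f b := by
    intro a b hab
    apply Finset.card_lt_card
    constructor
    · intro c hc
      simp only [Finset.mem_filter, Finset.mem_univ, true_and] at hc ⊢
      right
      rcases hc with rfl | hc
      · exact Relation.TransGen.single hab
      · exact hc.tail hab
    · intro hsub
      have hb : b ∈ Finset.univ.filter (fun c => c = b ∨ Relation.TransGen E c b) := by simp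
      have := hsub hb
      simp only [Finset.mem_filter, Finset.mem_univ, true_and] at this
      rcases this with rfl | h
      · exact hacyc b (Relation.TransGen.single hab)
      · exact hacyc b (h.tail hab)
  set S : R → Finset A := fun r => Finset.univ.filter (fun a => u a r = 1) with hS
  have hgdef : ∀ r, ∃ a : A, ((S r).Nonempty → a ∈ S r ∧ ∀ b ∈ S r, f a ≤ f b) := by
    intro r
    by_cases h : (S r).Nonempty
    · obtain ⟨a, ha, hmin⟩ := Finset.exists_min_image (S r) f h
      exact ⟨a, fun _ => ⟨ha, hmin⟩⟩
    · exact ⟨Classical.arbitrary A, fun h' => absurd h' h⟩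
  choose g hg using hgdef
  set π : A → Finset R := fun a => Finset.univ.filter (fun r => g r = a ∧ u a r = 1) with hπ
  refine ⟨π, ?_, ?_, ?_⟩
  · intro x y hxy
    rw [Finset.disjoint_left]
    intro r hrx hry
    simp only [hπ, Finset.mem_filter, Finset.mem_univ, true_and] at hrx hry
    exact hxy (hrx.1 ▸ hry.1.symm ▸ rfl)
  · intro a b hab
    have hz : ∀ r ∈ π b, u a r = 0 := by
      intro r hr
      simp only [hπ, Finset.mem_filter, Finset.mem_univ, true_and] at hr
      rcases h01 a r with h0 | h1
      · exact h0
      · exfalso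
        have haS : a ∈ S r := by simp [hS, h1]
        have hne : (S r).Nonempty := ⟨a, haS⟩
        have hmin := (hg r hne).2 a haS
        rw [hr.1] at hmin
        exact absurd (hf a b hab) (not_lt.mpr hmin)
    rw [Finset.sum_eq_zero hz]
    exact Nat.zero_le _
  · have step : ∀ a : A, ∑ r ∈ π a, u a r =
        ∑ r : R, (if g r = a ∧ u a r = 1 then u a r else 0) := by
      intro a
      rw [hπ]
      rw [Finset.sum_filter]
    calc ∑ a : A, ∑ r ∈ π a, u a r
        = ∑ a : A, ∑ r : R, (if g r = a ∧ u a r = 1 then u a r else 0) := by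
          exact Finset.sum_congr rfl (fun a _ => step a)
      _ = ∑ r : R, ∑ a : A, (if g r = a ∧ u a r = 1 then u a r else 0) := Finset.sum_comm
      _ = ∑ r : R, Finset.univ.sup (fun a => u a r) := by
          refine Finset.sum_congr rfl (fun r _ => ?_)
          rw [Finset.sum_eq_single (g r)]
          · by_cases h : ∃ a, u a r = 1
            · obtain ⟨a, ha⟩ := h
              have haS : a ∈ S r := by simp [hS, ha]
              have hne : (S r).Nonempty := ⟨a, haS⟩
              have hgS := (hg r hne).1
              simp only [hS, Finset.mem_filter, Finset.mem_univ, true_and] at hgS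
              rw [if_pos ⟨rfl, hgS⟩, hgS]
              symm
              refine le_antisymm (Finset.sup_le fun b _ => ?_) ?_
              · rcases h01 b r with hb | hb <;> omega
              · calc (1:ℕ) = u a r := ha.symm
                  _ ≤ _ := Finset.le_sup (f := fun a => u a r) (Finset.mem_univ a)
            · push_neg at h
              have h0 : ∀ a, u a r = 0 := fun a => (h01 a r).resolve_right (h a)
              rw [if_neg (by simp [h0])]
              exact (Nat.le_zero.mp (Finset.sup_le fun b _ => le_of_eq (h0 b))).symm
          · intro b _ hb
            rw [if_neg (fun hc => hb hc.1.symm)]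
          · intro hgr
            exact absurd (Finset.mem_univ (g r)) hgr
end

section
/- Assume the agents have identical utilities given by a single additive monotonic utility function u, let G be an acyclic attention graph on a nonempty finite set A of agents, and suppose there exists a set S ⊆ R of resources with |S| = |A| whose utility values are pairwise distinct (u is injective on S). Then a complete strongly G-envy-free allocation exists. -/
/-- Identical utilities, acyclic attention graph on a nonempty
agent set, and a set `S ⊆ R` with `|S| = |A|` of pairwise distinctly valued
resources: a complete strongly G-envy-free allocation exists. -/
theorem stmt_17 {A R : Type*} [Fintype A] [Fintype R] [Nonempty A]
    (E : A → A → Prop)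
    (hacyc : ∀ a, ¬ Relation.TransGen E a a)
    (u : R → ℕ)
    (S : Finset R) (hScard : S.card = Fintype.card A)
    (hinj : ∀ r ∈ S, ∀ r' ∈ S, u r = u r' → r = r') :
    ∃ π : A → Finset R, (∀ x y, x ≠ y → Disjoint (π x) (π y)) ∧
      (∀ r : R, ∃ a, r ∈ π a) ∧
      (∀ a b, E a b → ∑ r ∈ π b, u r < ∑ r ∈ π a, u r) := by
  classical
  set n := Fintype.card A with hn
  have hn0 : 0 < n := Fintype.card_pos
  -- rank: number of strict descendants
  set rank : A → ℕ := fun a =>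
    (Finset.univ.filter (fun c => Relation.TransGen E a c)).card with hrankdef
  have hrank_lt : ∀ a b, E a b → rank b < rank a := by
    intro a b hab
    apply Finset.card_lt_card
    constructor
    · intro c hc
      simp only [Finset.mem_filter, Finset.mem_univ, true_and] at hc ⊢
      exact (Relation.TransGen.single hab).trans hc
    · intro hsub
      have hb : b ∈ Finset.univ.filter (fun c => Relation.TransGen E a c) := by
        simp only [Finset.mem_filter, Finset.mem_univ, true_and]
        exact Relation.TransGen.single hab
      have := hsub hb
      simp only [Finset.mem_filter, Finset.mem_univ, true_and] at this
      exact hacyc b this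
  -- injective key, strictly increasing along edges (target smaller)
  let enc : A ≃ Fin n := Fintype.equivFin A
  set f : A → ℕ := fun a => rank a * n + (enc a : ℕ) with hfdef
  have hkeyf : ∀ x y : A, rank x < rank y → f x < f y := by
    intro x y hxy
    have hx : (enc x : ℕ) < n := (enc x).2
    simp only [hfdef]
    calc rank x * n + (enc x : ℕ) < rank x * n + n := by omega
    _ = (rank x + 1) * n := by ring
    _ ≤ rank y * n := Nat.mul_le_mul_right n hxy
    _ ≤ rank y * n + (enc y : ℕ) := Nat.le_add_right _ _
  have hf_inj : Function.Injective f := by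
    intro a b hab
    have hr : rank a = rank b := by
      rcases Nat.lt_trichotomy (rank a) (rank b) with h | h | h
      · exact absurd hab (Nat.ne_of_lt (hkeyf a b h))
      · exact h
      · exact absurd hab.symm (Nat.ne_of_lt (hkeyf b a h))
    simp only [hfdef, hr] at hab
    have : enc a = enc b := Fin.ext (Nat.add_left_cancel hab)
    exact enc.injective this
  have hf_lt : ∀ a b, E a b → f b < f a := fun a b hab => hkeyf b a (hrank_lt a b hab)
  -- linear order on A via f
  letI : LinearOrder A := LinearOrder.lift' f hf_inj
  have hle : ∀ a b : A, a ≤ b ↔ f a ≤ f b := fun a b => Iff.rfl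
  have hlt : ∀ a b : A, a < b ↔ f a < f b := by
    intro a b
    constructor
    · intro h
      exact lt_of_le_of_ne ((hle a b).1 h.le) (fun hf => h.ne (hf_inj hf))
    · intro h
      exact lt_of_le_of_ne ((hle a b).2 h.le) (fun hab => h.ne (congrArg f hab))
  let e : A ≃o Fin n := (monoEquivOfFin A hn.symm).symm
  have he_lt : ∀ a b : A, E a b → e b < e a := by
    intro a b hab
    exact e.strictMono ((hlt b a).2 (hf_lt a b hab))
  -- resources: sorted by utility
  set T : Finset ℕ := S.image u with hTdef
  have hTcard : T.card = n := by
    rw [hTdef, Finset.card_image_of_injOn, hScard]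
    intro r hr r' hr' h
    exact hinj r hr r' hr' h
  let o : Fin n ≃o {x // x ∈ T} := T.orderIsoOfFin hTcard
  have hex : ∀ i : Fin n, ∃! r, r ∈ S ∧ u r = ((o i : ℕ)) := by
    intro i
    have hmem : ((o i : ℕ)) ∈ T := (o i).2
    obtain ⟨r, hr, hur⟩ := Finset.mem_image.mp hmem
    refine ⟨r, ⟨hr, hur⟩, ?_⟩
    rintro r' ⟨hr', hur'⟩
    exact hinj r' hr' r hr (by rw [hur, hur'])
  set s : Fin n → R := fun i => Finset.choose (fun r => u r = ((o i : ℕ))) S (hex i) with hsdef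
  have hsS : ∀ i, s i ∈ S := fun i => Finset.choose_mem _ S (hex i)
  have hsu : ∀ i, u (s i) = (o i : ℕ) := fun i => Finset.choose_property _ S (hex i)
  have hs_mono : ∀ i j : Fin n, i < j → u (s i) < u (s j) := by
    intro i j hij
    rw [hsu, hsu]
    exact o.strictMono hij
  -- the special agent getting leftover resources
  set top : Fin n := ⟨n - 1, by omega⟩ with htopdef
  set a0 : A := e.symm top with ha0def
  -- the allocation
  set π : A → Finset R := fun a =>
    (if a = a0 then Sᶜ else ∅) ∪ {s (e a)} with hπdef
  refine ⟨π, ?_, ?_, ?_⟩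
  · -- disjoint
    intro x y hxy
    rw [Finset.disjoint_left]
    intro r hrx hry
    simp only [hπdef, Finset.mem_union, Finset.mem_singleton] at hrx hry
    have hsne : s (e x) ≠ s (e y) := by
      intro h
      apply hxy
      have : (o (e x) : ℕ) = (o (e y) : ℕ) := by rw [← hsu, ← hsu, h]
      have := o.injective (Subtype.ext this)
      exact e.injective this
    rcases hrx with hrx | hrx <;> rcases hry with hry | hry
    · split_ifs at hrx hry with h1 h2
      · exact hxy (h1.trans h2.symm)
      all_goals simp_all
    · split_ifs at hrx with h1
      · rw [hry] at hrx; exact (Finset.mem_compl.mp hrx) (hsS _)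
      · simp_all
    · split_ifs at hry with h1
      · rw [hrx] at hry; exact (Finset.mem_compl.mp hry) (hsS _)
      · simp_all
    · exact hsne (hrx.symm ▸ hry ▸ rfl)
  · -- complete
    intro r
    by_cases hr : r ∈ S
    · have hurT : u r ∈ T := Finset.mem_image_of_mem u hr
      set j : Fin n := o.symm ⟨u r, hurT⟩ with hjdef
      refine ⟨e.symm j, ?_⟩
      have : u (s j) = u r := by
        rw [hsu, hjdef, OrderIso.apply_symm_apply]
      have hsj : s j = r := hinj _ (hsS j) _ hr this
      simp only [hπdef, Finset.mem_union, Finset.mem_singleton]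
      right
      rw [OrderIso.apply_symm_apply, hsj]
    · refine ⟨a0, ?_⟩
      simp only [hπdef, Finset.mem_union, Finset.mem_singleton, if_pos rfl]
      left
      exact Finset.mem_compl.mpr hr
  · -- envy-free along edges
    intro a b hab
    have hlt' : e b < e a := he_lt a b hab
    have hbne : b ≠ a0 := by
      intro h
      have htb : e b = top := by rw [h, ha0def]; exact e.apply_symm_apply top
      have h2 : (e b : ℕ) < (e a : ℕ) := hlt'
      have h3 : (e a : ℕ) < n := (e a).2
      have h4 : (e b : ℕ) = n - 1 := by rw [htb]
      omega
    have hπb : π b = {s (e b)} := by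
      simp only [hπdef, if_neg hbne, Finset.empty_union]
    have hsumb : ∑ r ∈ π b, u r = u (s (e b)) := by
      rw [hπb, Finset.sum_singleton]
    have hkey : u (s (e b)) < u (s (e a)) := hs_mono _ _ hlt'
    have hsuba : {s (e a)} ⊆ π a := by
      simp only [hπdef]
      exact Finset.subset_union_right
    have hsuma : u (s (e a)) ≤ ∑ r ∈ π a, u r := by
      calc u (s (e a)) = ∑ r ∈ ({s (e a)} : Finset R), u r := (Finset.sum_singleton _ _).symm
      _ ≤ ∑ r ∈ π a, u r := Finset.sum_le_sum_of_subset hsuba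
    omega
end
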